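/- For 0 < λ < μ and l ≥ 1, the M/M/l expected response time (l/μ)(1 + ϱ_l/(l(1−λ/μ))) with ϱ_l ∈ [0,1] the Erlang-C probability is at most the M/M/1-split response time l/(μ−λ). -/

import Mathlib

open Finset

/-- For `0 < λ < μ` and `l ≥ 1`, the M/M/l expected response time
`(l/μ)(1 + ϱ_l/(l(1 - λ/μ)))`, with `ϱ_l` the Erlang-C probability for `l` servers,
is at most the M/M/1-split response time `l/(μ - λ)`. -/
theorem mml_response_le_mm1_split (lam mu : ℝ) (h0 : 0 < lam) (h1 : lam < mu)
    (l : ℕ) (hl : 1 ≤ l) :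
    ((l : ℝ) / mu) *
        (1 +
          (((l * (lam / mu)) ^ l / (l.factorial * (1 - lam / mu))) *
              (1 / (1 + (l * (lam / mu)) ^ l / (l.factorial * (1 - lam / mu)) +
                ∑ i ∈ Icc 1 (l - 1), (l * (lam / mu)) ^ i / i.factorial))) /
            (l * (1 - lam / mu)))
      ≤ l / (mu - lam) := by
  have hmu : 0 < mu := h0.trans h1
  set ρ : ℝ := lam / mu with hρ
  have hρ0 : 0 < ρ := div_pos h0 hmu
  have hρ1 : ρ < 1 := (div_lt_one hmu).mpr h1
  have h1ρ : 0 < 1 - ρ := by linarith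
  have hl0 : (1:ℝ) ≤ (l:ℝ) := by exact_mod_cast hl
  have hlpos : (0:ℝ) < l := by linarith
  set x : ℝ := (l:ℝ) * ρ with hx
  have hx0 : 0 < x := mul_pos hlpos hρ0
  have hfac : (1:ℝ) ≤ (l.factorial : ℝ) := by exact_mod_cast l.factorial_pos
  have hfac0 : (0:ℝ) < (l.factorial : ℝ) := by linarith
  set A : ℝ := x ^ l / (l.factorial * (1 - ρ)) with hA
  have hA0 : 0 ≤ A := div_nonneg (pow_nonneg hx0.le l) (mul_pos hfac0 h1ρ).le
  set S : ℝ := ∑ i ∈ Icc 1 (l - 1), x ^ i / i.factorial with hS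
  have hS0 : 0 ≤ S := by
    apply Finset.sum_nonneg
    intro i _
    exact div_nonneg (pow_nonneg hx0.le i) (Nat.cast_nonneg _)
  have hD : 0 < 1 + A + S := by linarith
  -- Erlang-C probability is at most x = l * ρ
  have hP : A * (1 / (1 + A + S)) ≤ x := by
    rw [mul_one_div, div_le_iff₀ hD]
    rcases le_or_gt 1 x with h | h
    · nlinarith [mul_nonneg hx0.le hS0, mul_nonneg hA0 (sub_nonneg.mpr h)]
    · have hxl : x ^ l ≤ x := by
        calc x ^ l ≤ x ^ 1 := pow_le_pow_of_le_one hx0.le h.le hl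
        _ = x := pow_one x
      have hρx : ρ ≤ x := by nlinarith
      have key : A * (1 - x) ≤ x := by
        rw [hA, div_mul_eq_mul_div, div_le_iff₀ (mul_pos hfac0 h1ρ)]
        nlinarith [mul_nonneg (sub_nonneg.mpr hxl) (sub_nonneg.mpr h.le),
          mul_nonneg (mul_nonneg hx0.le h1ρ.le) (sub_nonneg.mpr hfac)]
      nlinarith [mul_nonneg hx0.le hS0]
  -- reduce response-time bound
  have step : A * (1 / (1 + A + S)) / ((l:ℝ) * (1 - ρ)) ≤ ρ / (1 - ρ) := by
    rw [div_le_div_iff₀ (mul_pos hlpos h1ρ) h1ρ]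
    have hP0 : 0 ≤ A * (1 / (1 + A + S)) :=
      mul_nonneg hA0 (one_div_nonneg.mpr hD.le)
    nlinarith
  have heq : (l:ℝ) / mu * (1 + ρ / (1 - ρ)) = (l:ℝ) / (mu - lam) := by
    have hml : mu - lam ≠ 0 := by linarith
    rw [hρ]
    field_simp
    ring
  calc ((l:ℝ) / mu) * (1 + A * (1 / (1 + A + S)) / ((l:ℝ) * (1 - ρ)))
      ≤ ((l:ℝ) / mu) * (1 + ρ / (1 - ρ)) := by
        apply mul_le_mul_of_nonneg_left _ (div_nonneg hlpos.le hmu.le)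
        linarith
    _ = (l:ℝ) / (mu - lam) := heq
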